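/- Let D, x be real numbers with 0 < D < x and let g : ℝ → ℝ be continuous on [x − D, x + D]. Then ∫₀^{2π} ∫₀^D g(√(u² + x² − 2·u·x·cos φ)) · u du dφ = ∫_{x−D}^{x+D} 2·arccos((u² + x² − D²)/(2·u·x)) · g(u) · u du. -/

import Mathlib

open MeasureTheory Real

open Set

noncomputable def holeF (D x : ℝ) (G : ℝ → ℝ) : ℝ × ℝ → ℝ :=
  fun z => Set.indicator {z : ℝ × ℝ | (z.1 - x)^2 + z.2^2 ≤ D^2}
    (fun z => G (Real.sqrt (z.1^2 + z.2^2))) z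

lemma holeF_meas (D x : ℝ) (G : ℝ → ℝ) (hG : Continuous G) :
    StronglyMeasurable (holeF D x G) := by
  apply StronglyMeasurable.indicator
  · exact (hG.comp ((continuous_fst.pow 2).add (continuous_snd.pow 2)).sqrt).stronglyMeasurable
  · exact (isClosed_le (by fun_prop) continuous_const).measurableSet

private lemma sqrt_mem_Icc (x D u t : ℝ) (hD : 0 < D) (hDx : D < x) (hu : 0 ≤ u)
    (huD : u ≤ D) (h1 : (x - u)^2 ≤ t) (h2 : t ≤ (x + u)^2) :
    Real.sqrt t ∈ Set.Icc (x - D) (x + D) := by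
  have hs : Real.sqrt t ^ 2 = t := Real.sq_sqrt (le_trans (by positivity) h1)
  have hs0 := Real.sqrt_nonneg t
  constructor <;> nlinarith [hs, hs0]

lemma angle_measure {c₀ : ℝ} (hc1 : -1 < c₀) :
    volume (Ioo (-π) π ∩ {θ : ℝ | c₀ ≤ Real.cos θ}) = ENNReal.ofReal (2 * Real.arccos c₀) := by
  by_cases hc2 : c₀ ≤ 1
  · have ha0 : 0 ≤ arccos c₀ := Real.arccos_nonneg c₀
    have haπ : arccos c₀ < π :=
      lt_of_le_of_ne (Real.arccos_le_pi c₀) (fun h => absurd (Real.arccos_eq_pi.1 h) (by linarith))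
    have hca : Real.cos (arccos c₀) = c₀ := Real.cos_arccos hc1.le hc2
    have hset : Ioo (-π) π ∩ {θ : ℝ | c₀ ≤ Real.cos θ} = Icc (-(arccos c₀)) (arccos c₀) := by
      ext θ
      simp only [mem_inter_iff, mem_Ioo, mem_setOf_eq, mem_Icc, ← abs_le]
      constructor
      · rintro ⟨⟨h1, h2⟩, hcos⟩
        by_contra hgt
        push_neg at hgt
        have habs : |θ| < π := abs_lt.2 ⟨h1, h2⟩
        have := Real.strictAntiOn_cos ⟨ha0, Real.arccos_le_pi c₀⟩ ⟨abs_nonneg θ, habs.le⟩ hgt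
        rw [Real.cos_abs, hca] at this
        linarith
      · intro habs
        have h1 : -π < θ := by rw [abs_le] at habs; linarith [habs.1]
        have h2 : θ < π := by rw [abs_le] at habs; linarith [habs.2]
        refine ⟨⟨h1, h2⟩, ?_⟩
        have := Real.cos_le_cos_of_nonneg_of_le_pi (abs_nonneg θ) (by linarith [Real.arccos_le_pi c₀] : arccos c₀ ≤ π) habs
        rw [Real.cos_abs, hca] at this
        linarith
    rw [hset, Real.volume_Icc]
    congr 1
    ring
  · push_neg at hc2
    have hempty : Ioo (-π) π ∩ {θ : ℝ | c₀ ≤ Real.cos θ} = ∅ := by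
      ext θ
      simp only [mem_inter_iff, mem_Ioo, mem_setOf_eq, mem_empty_iff_false, iff_false, not_and]
      intro _ h
      linarith [Real.cos_le_one θ]
    rw [hempty, Real.arccos_eq_zero.2 hc2.le]
    simp

private lemma polar_norm_sq (r x θ : ℝ) :
    (r * Real.cos θ + x) ^ 2 + (r * Real.sin θ) ^ 2
      = r ^ 2 + 2 * r * x * Real.cos θ + x ^ 2 := by
  have h := Real.sin_sq_add_cos_sq θ
  calc (r * Real.cos θ + x) ^ 2 + (r * Real.sin θ) ^ 2
      = r ^ 2 * (Real.sin θ ^ 2 + Real.cos θ ^ 2) + 2 * r * x * Real.cos θ + x ^ 2 := by ring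
    _ = r ^ 2 + 2 * r * x * Real.cos θ + x ^ 2 := by rw [h]; ring

private lemma polar_center_sq (r x θ : ℝ) :
    (r * Real.cos θ + x - x) ^ 2 + (r * Real.sin θ) ^ 2 = r ^ 2 := by
  have h := Real.sin_sq_add_cos_sq θ
  calc (r * Real.cos θ + x - x) ^ 2 + (r * Real.sin θ) ^ 2
      = r ^ 2 * (Real.sin θ ^ 2 + Real.cos θ ^ 2) := by ring
    _ = r ^ 2 := by rw [h]; ring


lemma way1 (D x : ℝ) (hD : 0 < D) (hDx : D < x) (G : ℝ → ℝ) (hG : Continuous G)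
    (M : ℝ) (hM0 : 0 ≤ M) (hM : ∀ t ∈ Set.Icc (x - D) (x + D), |G t| ≤ M) :
    ∫ p : ℝ × ℝ, holeF D x G p
      = ∫ u in (x - D)..(x + D),
          2 * Real.arccos ((u ^ 2 + x ^ 2 - D ^ 2) / (2 * u * x)) * G u * u := by
  have hx : 0 < x := hD.trans hDx
  rw [← integral_comp_polarCoord_symm, polarCoord_target]
  simp_rw [polarCoord_symm_apply]
  set F : ℝ × ℝ → ℝ := fun p => p.1 • holeF D x G (p.1 * cos p.2, p.1 * sin p.2) with hF
  -- integrability on the target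
  have htm : MeasurableSet (Ioi (0:ℝ) ×ˢ Ioo (-π) π) :=
    measurableSet_Ioi.prod measurableSet_Ioo
  have hmeasF : AEStronglyMeasurable F (volume.restrict (Ioi (0:ℝ) ×ˢ Ioo (-π) π)) := by
    refine ((continuous_fst.stronglyMeasurable).smul
      ((holeF_meas D x G hG).comp_measurable ?_)).aestronglyMeasurable
    exact (continuous_prodMk.2 ⟨continuous_fst.mul (Real.continuous_cos.comp continuous_snd),
      continuous_fst.mul (Real.continuous_sin.comp continuous_snd)⟩).measurable
  have hbound : Integrable ((Icc (x - D) (x + D) ×ˢ Icc (-π) π).indicator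
      (fun _ : ℝ × ℝ => (x + D) * M)) (volume.restrict (Ioi (0:ℝ) ×ˢ Ioo (-π) π)) := by
    refine Integrable.restrict ?_
    rw [integrable_indicator_iff ((measurableSet_Icc).prod measurableSet_Icc)]
    refine integrableOn_const (lt_top_iff_ne_top.1 ?_)
    rw [Measure.volume_eq_prod, Measure.prod_prod]
    exact ENNReal.mul_lt_top (by rw [Real.volume_Icc]; exact ENNReal.ofReal_lt_top)
      (by rw [Real.volume_Icc]; exact ENNReal.ofReal_lt_top)
  have hFle : ∀ p ∈ Ioi (0:ℝ) ×ˢ Ioo (-π) π, ‖F p‖ ≤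
      (Icc (x - D) (x + D) ×ˢ Icc (-π) π).indicator (fun _ : ℝ × ℝ => (x + D) * M) p := by
    rintro ⟨r, θ⟩ ⟨hr, hθ⟩
    simp only [mem_Ioi] at hr
    simp only [mem_Ioo] at hθ
    by_cases hmem : ((r * cos θ - x)^2 + (r * sin θ)^2 ≤ D^2)
    · have hexp : (r * cos θ - x)^2 + (r * sin θ)^2 = r^2 - 2*r*x*cos θ + x^2 := by
        nlinarith [Real.sin_sq_add_cos_sq θ]
      have hrx : (r - x)^2 ≤ D^2 := by
        nlinarith [hexp, Real.cos_le_one θ, mul_pos hr hx]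
      have hr1 : x - D ≤ r := by nlinarith
      have hr2 : r ≤ x + D := by nlinarith
      have hin : ((r, θ) : ℝ × ℝ) ∈ Icc (x - D) (x + D) ×ˢ Icc (-π) π :=
        ⟨⟨hr1, hr2⟩, ⟨hθ.1.le, hθ.2.le⟩⟩
      rw [indicator_of_mem hin]
      have hval : holeF D x G ((r:ℝ) * cos θ, r * sin θ) = G r := by
        have harg : Real.sqrt ((r * cos θ)^2 + (r * sin θ)^2) = r := by
          have : (r * cos θ)^2 + (r * sin θ)^2 = r^2 := by
            nlinarith [Real.sin_sq_add_cos_sq θ]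
          rw [this, Real.sqrt_sq hr.le]
        simp only [holeF]
        rw [indicator_of_mem (by exact hmem)]
        rw [harg]
      rw [hF]
      simp only [smul_eq_mul, hval, Real.norm_eq_abs]
      rw [abs_mul]
      have := hM r ⟨hr1, hr2⟩
      rw [abs_of_pos hr]
      exact mul_le_mul hr2 this (abs_nonneg _) (by linarith)
    · have hval : holeF D x G ((r:ℝ) * cos θ, r * sin θ) = 0 :=
        indicator_of_notMem (by exact hmem) _
      rw [hF]
      simp only [smul_eq_mul, hval, mul_zero, norm_zero]
      exact indicator_nonneg (fun _ _ => by positivity) _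
  have hint : IntegrableOn F (Ioi (0:ℝ) ×ˢ Ioo (-π) π) volume := by
    refine Integrable.mono' hbound hmeasF ?_
    exact (ae_restrict_iff' htm).2 (Filter.Eventually.of_forall hFle)
  rw [Measure.volume_eq_prod] at hint ⊢
  rw [setIntegral_prod F hint]
  have hinner : ∀ r ∈ Ioi (0:ℝ), (∫ θ in Ioo (-π) π, F (r, θ))
      = 2 * Real.arccos ((r ^ 2 + x ^ 2 - D ^ 2) / (2 * r * x)) * G r * r := by
    intro r hr
    simp only [mem_Ioi] at hr
    set c₀ := (r ^ 2 + x ^ 2 - D ^ 2) / (2 * r * x) with hc₀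
    have h2rx : 0 < 2 * r * x := by positivity
    have hc1 : -1 < c₀ := by
      rw [hc₀, lt_div_iff₀ h2rx]
      nlinarith
    have hcond : ∀ θ : ℝ, ((r * cos θ, r * sin θ) ∈
        {z : ℝ × ℝ | (z.1 - x)^2 + z.2^2 ≤ D^2}) ↔ c₀ ≤ cos θ := by
      intro θ
      simp only [mem_setOf_eq]
      rw [hc₀, div_le_iff₀ h2rx]
      constructor <;> intro h <;> nlinarith [Real.sin_sq_add_cos_sq θ]
    have hfun : (fun θ => F (r, θ))
        = Set.indicator {θ : ℝ | c₀ ≤ cos θ} (fun _ => r * G r) := by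
      funext θ
      by_cases h : c₀ ≤ cos θ
      · rw [indicator_of_mem (by exact h)]
        have harg : Real.sqrt ((r * cos θ)^2 + (r * sin θ)^2) = r := by
          have : (r * cos θ)^2 + (r * sin θ)^2 = r^2 := by
            nlinarith [Real.sin_sq_add_cos_sq θ]
          rw [this, Real.sqrt_sq hr.le]
        simp only [hF, smul_eq_mul, holeF]
        rw [indicator_of_mem ((hcond θ).2 h), harg]
      · rw [indicator_of_notMem (by exact h)]
        simp only [hF, smul_eq_mul, holeF]
        rw [indicator_of_notMem (fun hmem => h ((hcond θ).1 hmem)), mul_zero]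
    rw [hfun, setIntegral_indicator ((isClosed_le continuous_const Real.continuous_cos).measurableSet),
      setIntegral_const, measureReal_def, angle_measure hc1,
      ENNReal.toReal_ofReal (by linarith [Real.arccos_nonneg c₀]), smul_eq_mul]
    ring
  calc (∫ r in Ioi (0:ℝ), ∫ θ in Ioo (-π) π, F (r, θ))
      = ∫ r in Ioi (0:ℝ),
          2 * Real.arccos ((r ^ 2 + x ^ 2 - D ^ 2) / (2 * r * x)) * G r * r :=
        setIntegral_congr_fun measurableSet_Ioi (fun r hr => hinner r hr)
    _ = ∫ r in Ioc (x - D) (x + D),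
          2 * Real.arccos ((r ^ 2 + x ^ 2 - D ^ 2) / (2 * r * x)) * G r * r := by
        refine setIntegral_eq_of_subset_of_forall_diff_eq_zero measurableSet_Ioi
          (fun r hr => lt_trans (by linarith) hr.1) ?_
        rintro r ⟨hr, hrn⟩
        simp only [mem_Ioi] at hr
        simp only [mem_Ioc, not_and_or, not_lt, not_le] at hrn
        have h2rx : 0 < 2 * r * x := by positivity
        have hge : 1 ≤ (r ^ 2 + x ^ 2 - D ^ 2) / (2 * r * x) := by
          rw [le_div_iff₀ h2rx]
          rcases hrn with h | h <;> nlinarith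
        rw [Real.arccos_eq_zero.2 hge]
        ring
    _ = ∫ u in (x - D)..(x + D),
          2 * Real.arccos ((u ^ 2 + x ^ 2 - D ^ 2) / (2 * u * x)) * G u * u :=
        (intervalIntegral.integral_of_le (by linarith)).symm

lemma way2 (D x : ℝ) (hD : 0 < D) (hDx : D < x) (G : ℝ → ℝ) (hG : Continuous G)
    (M : ℝ) (hM0 : 0 ≤ M) (hM : ∀ t ∈ Set.Icc (x - D) (x + D), |G t| ≤ M) :
    ∫ p : ℝ × ℝ, holeF D x G p
      = ∫ φ in (0:ℝ)..(2 * π),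
          ∫ u in (0:ℝ)..D, G (Real.sqrt (u ^ 2 + x ^ 2 - 2 * u * x * Real.cos φ)) * u := by
  have hx : 0 < x := hD.trans hDx
  have key : ∫ p : ℝ × ℝ, holeF D x G p
      = ∫ u in Ioc (0:ℝ) D,
          (∫ θ in Ioo (-π) π, G (Real.sqrt (u ^ 2 + x ^ 2 + 2 * u * x * Real.cos θ))) * u := by
    rw [← integral_add_right_eq_self (holeF D x G) ((x, 0) : ℝ × ℝ),
      ← integral_comp_polarCoord_symm (fun z => holeF D x G (z + (x, 0))), polarCoord_target]
    simp_rw [polarCoord_symm_apply, Prod.mk_add_mk, add_zero]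
    set F : ℝ × ℝ → ℝ := fun p => p.1 • holeF D x G (p.1 * cos p.2 + x, p.1 * sin p.2) with hF
    have htm : MeasurableSet (Ioi (0:ℝ) ×ˢ Ioo (-π) π) :=
      measurableSet_Ioi.prod measurableSet_Ioo
    have hmeasF : AEStronglyMeasurable F (volume.restrict (Ioi (0:ℝ) ×ˢ Ioo (-π) π)) := by
      refine ((continuous_fst.stronglyMeasurable).smul
        ((holeF_meas D x G hG).comp_measurable ?_)).aestronglyMeasurable
      exact (continuous_prodMk.2 ⟨(continuous_fst.mul
        (Real.continuous_cos.comp continuous_snd)).add continuous_const,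
        continuous_fst.mul (Real.continuous_sin.comp continuous_snd)⟩).measurable
    have hbound : Integrable ((Icc (0:ℝ) D ×ˢ Icc (-π) π).indicator
        (fun _ : ℝ × ℝ => D * M)) (volume.restrict (Ioi (0:ℝ) ×ˢ Ioo (-π) π)) := by
      refine Integrable.restrict ?_
      rw [integrable_indicator_iff ((measurableSet_Icc).prod measurableSet_Icc)]
      refine integrableOn_const (lt_top_iff_ne_top.1 ?_)
      rw [Measure.volume_eq_prod, Measure.prod_prod]
      exact ENNReal.mul_lt_top (by rw [Real.volume_Icc]; exact ENNReal.ofReal_lt_top)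
        (by rw [Real.volume_Icc]; exact ENNReal.ofReal_lt_top)
    have hFle : ∀ p ∈ Ioi (0:ℝ) ×ˢ Ioo (-π) π, ‖F p‖ ≤
        (Icc (0:ℝ) D ×ˢ Icc (-π) π).indicator (fun _ : ℝ × ℝ => D * M) p := by
      rintro ⟨r, θ⟩ ⟨hr, hθ⟩
      simp only [mem_Ioi] at hr
      simp only [mem_Ioo] at hθ
      by_cases hmem : (((r * cos θ + x) - x)^2 + (r * sin θ)^2 ≤ D^2)
      · have hrD : r ≤ D := by nlinarith [polar_center_sq r x θ]
        have hin : ((r, θ) : ℝ × ℝ) ∈ Icc (0:ℝ) D ×ˢ Icc (-π) π :=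
          ⟨⟨hr.le, hrD⟩, ⟨hθ.1.le, hθ.2.le⟩⟩
        rw [indicator_of_mem hin]
        have harg : Real.sqrt ((r * cos θ + x)^2 + (r * sin θ)^2) ∈ Icc (x - D) (x + D) := by
          have h1 : 0 ≤ r * x * (1 + cos θ) :=
            mul_nonneg (mul_pos hr hx).le (by linarith [Real.neg_one_le_cos θ])
          have h2 : 0 ≤ r * x * (1 - cos θ) :=
            mul_nonneg (mul_pos hr hx).le (by linarith [Real.cos_le_one θ])
          refine sqrt_mem_Icc x D r _ hD hDx hr.le hrD ?_ ?_ <;>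
            nlinarith [polar_norm_sq r x θ, h1, h2]
        have hval : holeF D x G ((r:ℝ) * cos θ + x, r * sin θ)
            = G (Real.sqrt ((r * cos θ + x)^2 + (r * sin θ)^2)) := by
          simp only [holeF]
          rw [indicator_of_mem (by exact hmem)]
        rw [hF]
        simp only [smul_eq_mul, hval, Real.norm_eq_abs]
        rw [abs_mul, abs_of_pos hr]
        exact mul_le_mul hrD (hM _ harg) (abs_nonneg _) hD.le
      · have hval : holeF D x G ((r:ℝ) * cos θ + x, r * sin θ) = 0 :=
          indicator_of_notMem (by exact hmem) _
        rw [hF]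
        simp only [smul_eq_mul, hval, mul_zero, norm_zero]
        exact indicator_nonneg (fun _ _ => by positivity) _
    have hint : IntegrableOn F (Ioi (0:ℝ) ×ˢ Ioo (-π) π) volume := by
      refine Integrable.mono' hbound hmeasF ?_
      exact (ae_restrict_iff' htm).2 (Filter.Eventually.of_forall hFle)
    rw [Measure.volume_eq_prod] at hint ⊢
    rw [setIntegral_prod F hint]
    have hinner : ∀ r ∈ Ioi (0:ℝ), (∫ θ in Ioo (-π) π, F (r, θ))
        = if r ≤ D then
            (∫ θ in Ioo (-π) π, G (Real.sqrt (r ^ 2 + x ^ 2 + 2 * r * x * Real.cos θ))) * r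
          else 0 := by
      intro r hr
      simp only [mem_Ioi] at hr
      by_cases hrD : r ≤ D
      · rw [if_pos hrD]
        have hfun : (fun θ => F (r, θ))
            = fun θ => r * G (Real.sqrt (r ^ 2 + x ^ 2 + 2 * r * x * Real.cos θ)) := by
          funext θ
          have hmem : ((r * cos θ + x) - x)^2 + (r * sin θ)^2 ≤ D^2 := by
            nlinarith [polar_center_sq r x θ]
          have harg : (r * cos θ + x)^2 + (r * sin θ)^2
              = r ^ 2 + x ^ 2 + 2 * r * x * cos θ := by
            nlinarith [polar_norm_sq r x θ]
          simp only [hF, smul_eq_mul, holeF]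
          rw [indicator_of_mem (by exact hmem), harg]
        rw [hfun, MeasureTheory.integral_const_mul]
        ring
      · rw [if_neg hrD]
        have hfun : (fun θ => F (r, θ)) = fun _ => (0:ℝ) := by
          funext θ
          have hmem : ¬(((r * cos θ + x) - x)^2 + (r * sin θ)^2 ≤ D^2) := by
            push_neg
            nlinarith [polar_center_sq r x θ]
          simp only [hF, smul_eq_mul, holeF]
          rw [indicator_of_notMem (by exact hmem), mul_zero]
        rw [hfun, integral_zero]
    calc (∫ r in Ioi (0:ℝ), ∫ θ in Ioo (-π) π, F (r, θ))
        = ∫ r in Ioi (0:ℝ), (if r ≤ D then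
            (∫ θ in Ioo (-π) π, G (Real.sqrt (r ^ 2 + x ^ 2 + 2 * r * x * Real.cos θ))) * r
          else 0) := setIntegral_congr_fun measurableSet_Ioi (fun r hr => hinner r hr)
      _ = ∫ r in Ioc (0:ℝ) D, (if r ≤ D then
            (∫ θ in Ioo (-π) π, G (Real.sqrt (r ^ 2 + x ^ 2 + 2 * r * x * Real.cos θ))) * r
          else 0) := by
          refine setIntegral_eq_of_subset_of_forall_diff_eq_zero measurableSet_Ioi
            (fun r hr => hr.1) ?_
          rintro r ⟨hr, hrn⟩
          simp only [mem_Ioi] at hr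
          simp only [mem_Ioc, not_and_or, not_lt, not_le] at hrn
          have hnle : ¬ (r ≤ D) := by intro hle; rcases hrn with h | h <;> linarith
          rw [if_neg hnle]
      _ = ∫ u in Ioc (0:ℝ) D,
            (∫ θ in Ioo (-π) π, G (Real.sqrt (u ^ 2 + x ^ 2 + 2 * u * x * Real.cos θ))) * u := by
          refine setIntegral_congr_fun measurableSet_Ioc (fun r hr => ?_)
          rw [if_pos hr.2]
  rw [key]
  -- now transform the double interval integral
  rw [intervalIntegral.integral_of_le (by positivity : (0:ℝ) ≤ 2 * π)]
  simp_rw [intervalIntegral.integral_of_le hD.le]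
  rw [MeasureTheory.integral_integral_swap]
  · refine (setIntegral_congr_fun measurableSet_Ioc (fun u _ => ?_)).symm
    have hshift : ∫ φ in Ioc (0:ℝ) (2 * π),
        G (Real.sqrt (u ^ 2 + x ^ 2 - 2 * u * x * Real.cos φ)) * u
        = ∫ θ in (-π)..π, G (Real.sqrt (u ^ 2 + x ^ 2 + 2 * u * x * Real.cos θ)) * u := by
      rw [← intervalIntegral.integral_of_le (by positivity : (0:ℝ) ≤ 2 * π)]
      have := intervalIntegral.integral_comp_add_right (a := -π) (b := π)
        (fun φ => G (Real.sqrt (u ^ 2 + x ^ 2 - 2 * u * x * Real.cos φ)) * u) π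
      rw [neg_add_cancel, ← two_mul] at this
      rw [← this]
      congr 1
      funext θ
      rw [Real.cos_add_pi]
      congr 2
      ring
    rw [hshift, intervalIntegral.integral_of_le (by linarith [Real.pi_pos] : -π ≤ π),
      integral_Ioc_eq_integral_Ioo, MeasureTheory.integral_mul_const]
  · rw [Measure.prod_restrict]
    have hcont : Continuous (Function.uncurry fun φ u =>
        G (Real.sqrt (u ^ 2 + x ^ 2 - 2 * u * x * Real.cos φ)) * u) := by
      apply Continuous.mul _ continuous_snd
      exact hG.comp (Real.continuous_sqrt.comp (by fun_prop))
    exact ((hcont.continuousOn.integrableOn_compact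
      (isCompact_Icc.prod isCompact_Icc)).mono_set
      (prod_mono Ioc_subset_Icc_self Ioc_subset_Icc_self))


theorem hole_integral_polar_to_radial
    (D x : ℝ) (hD : 0 < D) (hDx : D < x)
    (g : ℝ → ℝ) (hg : ContinuousOn g (Set.Icc (x - D) (x + D))) :
    ∫ φ in (0:ℝ)..(2 * π),
        (∫ u in (0:ℝ)..D, g (Real.sqrt (u ^ 2 + x ^ 2 - 2 * u * x * Real.cos φ)) * u)
      = ∫ u in (x - D)..(x + D),
          2 * Real.arccos ((u ^ 2 + x ^ 2 - D ^ 2) / (2 * u * x)) * g u * u := by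
  have hx : 0 < x := hD.trans hDx
  obtain ⟨Gc, hGc⟩ := ContinuousMap.exists_restrict_eq (Y := ℝ)
    (isClosed_Icc : IsClosed (Set.Icc (x - D) (x + D)))
    ⟨_, hg.restrict⟩
  set G : ℝ → ℝ := ⇑Gc with hGdef
  have hGg : ∀ t ∈ Set.Icc (x - D) (x + D), G t = g t := by
    intro t ht
    exact congrFun (congrArg DFunLike.coe hGc) ⟨t, ht⟩
  obtain ⟨M, hM⟩ := (isCompact_Icc (a := x - D) (b := x + D)).exists_bound_of_continuousOn
    Gc.continuous.continuousOn
  simp only [Real.norm_eq_abs] at hM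
  have hM0 : 0 ≤ M := le_trans (abs_nonneg _) (hM x ⟨by linarith, by linarith⟩)
  have hL : (∫ φ in (0:ℝ)..(2 * π),
        (∫ u in (0:ℝ)..D, g (Real.sqrt (u ^ 2 + x ^ 2 - 2 * u * x * Real.cos φ)) * u))
      = ∫ φ in (0:ℝ)..(2 * π),
        (∫ u in (0:ℝ)..D, G (Real.sqrt (u ^ 2 + x ^ 2 - 2 * u * x * Real.cos φ)) * u) := by
    refine intervalIntegral.integral_congr (fun φ _ => ?_)
    refine intervalIntegral.integral_congr (fun u hu => ?_)
    rw [Set.uIcc_of_le hD.le] at hu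
    have h1 : 0 ≤ u * x * (1 - Real.cos φ) :=
      mul_nonneg (mul_nonneg hu.1 hx.le) (by linarith [Real.cos_le_one φ])
    have h2 : 0 ≤ u * x * (1 + Real.cos φ) :=
      mul_nonneg (mul_nonneg hu.1 hx.le) (by linarith [Real.neg_one_le_cos φ])
    have hmem := sqrt_mem_Icc x D u (u ^ 2 + x ^ 2 - 2 * u * x * Real.cos φ) hD hDx hu.1 hu.2
      (by nlinarith) (by nlinarith)
    rw [hGg _ hmem]
  have hR : (∫ u in (x - D)..(x + D),
        2 * Real.arccos ((u ^ 2 + x ^ 2 - D ^ 2) / (2 * u * x)) * G u * u)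
      = ∫ u in (x - D)..(x + D),
        2 * Real.arccos ((u ^ 2 + x ^ 2 - D ^ 2) / (2 * u * x)) * g u * u := by
    refine intervalIntegral.integral_congr (fun u hu => ?_)
    rw [Set.uIcc_of_le (by linarith)] at hu
    rw [hGg u hu]
  rw [hL, ← hR]
  exact (way2 D x hD hDx G Gc.continuous M hM0 hM).symm.trans
    (way1 D x hD hDx G Gc.continuous M hM0 hM)
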